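/- Let H be a complex Hilbert space decomposed as the orthogonal direct sum of subspaces H_m indexed by m ∈ ℤ (via pairwise orthogonal projections P_m with ∑_{m∈ℤ} P_m = I strongly). Suppose a and c are bounded operators on H with ‖c‖ ≤ 1 such that P_m c P_n = (m − n) · (P_m a P_n) for all m, n ∈ ℤ. Then for every integer k ≥ 1 one has ‖a − ∑_{j=−k}^{k} ρ_j(a)‖ ≤ √(2/k), where ρ_j(a) is the bounded operator determined by P_m ρ_j(a) P_n = P_m a P_n when m − n = j and P_m ρ_j(a) P_n = 0 when m − n ≠ j. -/

import Mathlib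

open scoped InnerProductSpace

section Aux

variable {H : Type*} [NormedAddCommGroup H] [InnerProductSpace ℂ H]

lemma finParseval {ι : Type*} (f : ι → H) (h : ∀ i j, i ≠ j → ⟪f i, f j⟫_ℂ = 0)
    (s : Finset ι) : ‖∑ i ∈ s, f i‖ ^ 2 = ∑ i ∈ s, ‖f i‖ ^ 2 := by
  classical
  have h1 : (⟪∑ i ∈ s, f i, ∑ j ∈ s, f j⟫_ℂ) = ∑ i ∈ s, ⟪f i, f i⟫_ℂ := by
    rw [sum_inner]
    refine Finset.sum_congr rfl fun i hi => ?_
    rw [inner_sum]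
    exact Finset.sum_eq_single_of_mem i hi (fun j _ hj => h i j (Ne.symm hj))
  have h2 : ∀ x : H, (⟪x, x⟫_ℂ) = (‖x‖ : ℂ) ^ 2 := fun x => inner_self_eq_norm_sq_to_K x
  rw [h2] at h1
  simp only [h2] at h1
  have : ((‖∑ i ∈ s, f i‖ ^ 2 : ℝ) : ℂ) = ((∑ i ∈ s, ‖f i‖ ^ 2 : ℝ) : ℂ) := by
    push_cast
    exact h1
  exact_mod_cast this

lemma hasSumParseval {ι : Type*} {f : ι → H} (h : ∀ i j, i ≠ j → ⟪f i, f j⟫_ℂ = 0)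
    {x : H} (hf : HasSum f x) : HasSum (fun i => ‖f i‖ ^ 2) (‖x‖ ^ 2) := by
  have hcont : Continuous (fun y : H => ‖y‖ ^ 2) := (continuous_pow 2).comp continuous_norm
  have := (hcont.tendsto x).comp hf
  simp only [HasSum] at this ⊢
  refine this.congr fun s => ?_
  exact finParseval f h s

lemma orthSummable {ι : Type*} [CompleteSpace H] {f : ι → H}
    (h : ∀ i j, i ≠ j → ⟪f i, f j⟫_ℂ = 0)
    (hsq : Summable fun i => ‖f i‖ ^ 2) : Summable f := by
  rw [summable_iff_vanishing]
  intro e he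
  obtain ⟨ε, hε, hball⟩ := Metric.mem_nhds_iff.mp he
  have h2 : Set.Iio (ε ^ 2) ∈ nhds (0 : ℝ) :=
    (isOpen_Iio).mem_nhds (Set.mem_Iio.mpr (by positivity))
  obtain ⟨s, hs⟩ := summable_iff_vanishing.mp hsq _ h2
  refine ⟨s, fun t ht => ?_⟩
  apply hball
  have h3 : ∑ i ∈ t, ‖f i‖ ^ 2 < ε ^ 2 := hs t ht
  have h4 : ‖∑ i ∈ t, f i‖ ^ 2 < ε ^ 2 := by rw [finParseval f h]; exact h3
  have : ‖∑ i ∈ t, f i‖ < ε := by nlinarith [norm_nonneg (∑ i ∈ t, f i)]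
  simpa [Metric.mem_ball] using this

lemma projContraction [CompleteSpace H] (p : H →L[ℂ] H) (hsa : IsSelfAdjoint p)
    (hid : p.comp p = p) (x : H) : ‖p x‖ ≤ ‖x‖ := by
  have hmove : ∀ u v : H, ⟪p u, v⟫_ℂ = ⟪u, p v⟫_ℂ := fun u v => by
    conv_lhs => rw [← hsa.adjoint_eq]
    exact ContinuousLinearMap.adjoint_inner_left p v u
  have h1 : (⟪p x, p x⟫_ℂ) = ⟪x, p x⟫_ℂ := by
    rw [hmove]
    congr 1
    have := congrArg (fun q : H →L[ℂ] H => q x) hid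
    simpa using this
  have h2 : ‖p x‖ ^ 2 = Complex.re ⟪x, p x⟫_ℂ := by
    rw [← h1]
    exact (inner_self_eq_norm_sq (𝕜 := ℂ) (p x)).symm
  have h3 : Complex.re ⟪x, p x⟫_ℂ ≤ ‖x‖ * ‖p x‖ := by
    calc Complex.re ⟪x, p x⟫_ℂ ≤ ‖(⟪x, p x⟫_ℂ)‖ := Complex.re_le_norm _
      _ ≤ ‖x‖ * ‖p x‖ := norm_inner_le_norm x (p x)
  nlinarith [norm_nonneg (p x), norm_nonneg x]

end Aux

lemma natTailSum (kn : ℕ) (hkn : kn ≠ 0) (t : Finset ℕ) (ht : ∀ i ∈ t, kn < i) :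
    ∑ i ∈ t, ((i : ℝ) ^ 2)⁻¹ ≤ (kn : ℝ)⁻¹ := by
  rcases t.eq_empty_or_nonempty with rfl | hne
  · simp
  · have hmax := t.max'_mem hne
    have hsub : t ⊆ Finset.Ioc kn (t.max' hne) := by
      intro i hi
      exact Finset.mem_Ioc.mpr ⟨ht i hi, Finset.le_max' t i hi⟩
    calc ∑ i ∈ t, ((i : ℝ) ^ 2)⁻¹
        ≤ ∑ i ∈ Finset.Ioc kn (t.max' hne), ((i : ℝ) ^ 2)⁻¹ :=
          Finset.sum_le_sum_of_subset_of_nonneg hsub (fun i _ _ => by positivity)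
      _ ≤ (kn : ℝ)⁻¹ - ((t.max' hne : ℕ) : ℝ)⁻¹ :=
          sum_Ioc_inv_sq_le_sub hkn (le_of_lt (ht _ hmax))
      _ ≤ (kn : ℝ)⁻¹ := by
          have : (0:ℝ) ≤ ((t.max' hne : ℕ) : ℝ)⁻¹ := by positivity
          linarith

lemma intTailSum (k : ℤ) (hk : 1 ≤ k) (s : Finset ℤ) :
    ∑ j ∈ s, (if k < |j| then ((j : ℝ) ^ 2)⁻¹ else 0) ≤ 2 / (k : ℝ) := by
  classical
  set r : ℤ → ℝ := fun j => if k < |j| then ((j : ℝ) ^ 2)⁻¹ else 0 with hr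
  have hcast : ((k.toNat : ℕ) : ℝ) = (k : ℝ) := by
    exact_mod_cast Int.toNat_of_nonneg (by omega : (0:ℤ) ≤ k)
  have hrs : ∑ j ∈ s, r j = ∑ j ∈ s.filter (fun j => k < |j|), r j := by
    rw [Finset.sum_filter]
    refine Finset.sum_congr rfl fun j _ => ?_
    by_cases h : k < |j| <;> simp [hr, h]
  have hsplit : s.filter (fun j => k < |j|) =
      s.filter (fun j => k < j) ∪ s.filter (fun j => j < -k) := by
    ext j
    simp only [Finset.mem_filter, Finset.mem_union]
    by_cases hjs : j ∈ s <;> simp only [hjs, true_and, false_and, lt_abs, or_false] <;> omega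
  have hdisj : Disjoint (s.filter (fun j => k < j)) (s.filter (fun j => j < -k)) := by
    rw [Finset.disjoint_left]
    intro j hj1 hj2
    have h1 := (Finset.mem_filter.mp hj1).2
    have h2 := (Finset.mem_filter.mp hj2).2
    omega
  have hpos : ∑ j ∈ s.filter (fun j => k < j), r j ≤ (k : ℝ)⁻¹ := by
    have himg : ∑ j ∈ s.filter (fun j => k < j), r j
        = ∑ i ∈ ((s.filter (fun j => k < j)).image Int.toNat : Finset ℕ), ((i : ℝ) ^ 2)⁻¹ := by
      rw [Finset.sum_image]
      · refine Finset.sum_congr rfl fun j hj => ?_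
        have hj' : k < j := (Finset.mem_filter.mp hj).2
        have h1 : k < |j| := by rw [abs_of_pos (by omega)]; exact hj'
        have h2 : ((j.toNat : ℕ) : ℝ) = (j : ℝ) := by
          exact_mod_cast Int.toNat_of_nonneg (by omega : (0:ℤ) ≤ j)
        simp [hr, h1, h2]
      · intro x hx y hy hxy
        have hx' : k < x := (Finset.mem_filter.mp hx).2
        have hy' : k < y := (Finset.mem_filter.mp hy).2
        omega
    rw [himg]
    calc ∑ i ∈ ((s.filter (fun j => k < j)).image Int.toNat : Finset ℕ), ((i : ℝ) ^ 2)⁻¹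
        ≤ (k.toNat : ℝ)⁻¹ := natTailSum k.toNat (by omega) _
          (fun i hi => by
            obtain ⟨j, hj, rfl⟩ := Finset.mem_image.mp hi
            have := (Finset.mem_filter.mp hj).2
            omega)
      _ = (k : ℝ)⁻¹ := by rw [hcast]
  have hneg : ∑ j ∈ s.filter (fun j => j < -k), r j ≤ (k : ℝ)⁻¹ := by
    have himg : ∑ j ∈ s.filter (fun j => j < -k), r j
        = ∑ i ∈ (((s.filter (fun j => j < -k)).image (fun j => (-j).toNat)) : Finset ℕ),
            ((i : ℝ) ^ 2)⁻¹ := by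
      rw [Finset.sum_image]
      · refine Finset.sum_congr rfl fun j hj => ?_
        have hj' : j < -k := (Finset.mem_filter.mp hj).2
        have h1 : k < |j| := by rw [abs_of_neg (by omega)]; omega
        have h2 : (((-j).toNat : ℕ) : ℝ) = ((-j : ℤ) : ℝ) := by
          exact_mod_cast Int.toNat_of_nonneg (by omega : (0:ℤ) ≤ -j)
        simp only [hr, if_pos h1, h2]
        push_cast
        rw [neg_sq]
      · intro x hx y hy hxy
        have hx' : x < -k := (Finset.mem_filter.mp hx).2
        have hy' : y < -k := (Finset.mem_filter.mp hy).2
        have hxy' : (-x).toNat = (-y).toNat := hxy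
        omega
    rw [himg]
    calc ∑ i ∈ (((s.filter (fun j => j < -k)).image (fun j => (-j).toNat)) : Finset ℕ),
            ((i : ℝ) ^ 2)⁻¹
        ≤ (k.toNat : ℝ)⁻¹ := natTailSum k.toNat (by omega) _
          (fun i hi => by
            obtain ⟨j, hj, rfl⟩ := Finset.mem_image.mp hi
            have := (Finset.mem_filter.mp hj).2
            omega)
      _ = (k : ℝ)⁻¹ := by rw [hcast]
  have hk' : (0:ℝ) < (k:ℝ) := by exact_mod_cast (by omega : (0:ℤ) < k)
  calc ∑ j ∈ s, r j = ∑ j ∈ s.filter (fun j => k < j), r j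
        + ∑ j ∈ s.filter (fun j => j < -k), r j := by
        rw [hrs, hsplit, Finset.sum_union hdisj]
    _ ≤ (k : ℝ)⁻¹ + (k : ℝ)⁻¹ := add_le_add hpos hneg
    _ = 2 / (k : ℝ) := by field_simp; ring

set_option maxHeartbeats 1000000 in
/-- If `[D, a]` is bounded of norm at most `1` for the diagonal operator
`D = ∑ m P_m` over `ℤ`, then the tails of the diagonal expansion of `a` satisfy
`‖a − ∑_{|j| ≤ k} ρ_j(a)‖ ≤ √(2/k)` for every `k ≥ 1`. -/
theorem norm_diagonal_tail_le
    (H : Type*) [NormedAddCommGroup H] [InnerProductSpace ℂ H] [CompleteSpace H]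
    (P : ℤ → H →L[ℂ] H)
    (hPsa : ∀ m, IsSelfAdjoint (P m))
    (hPidem : ∀ m, (P m).comp (P m) = P m)
    (hPorth : ∀ m n : ℤ, m ≠ n → (P m).comp (P n) = 0)
    (hPsum : ∀ v : H, HasSum (fun m => P m v) v)
    (a c : H →L[ℂ] H) (hc : ‖c‖ ≤ 1)
    (hcomm : ∀ m n : ℤ,
      (P m).comp (c.comp (P n)) = ((m - n : ℤ) : ℂ) • ((P m).comp (a.comp (P n))))
    (ρ : ℤ → H →L[ℂ] H)
    (hρeq : ∀ j m n : ℤ, m - n = j →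
      (P m).comp ((ρ j).comp (P n)) = (P m).comp (a.comp (P n)))
    (hρne : ∀ j m n : ℤ, m - n ≠ j → (P m).comp ((ρ j).comp (P n)) = 0) :
    ∀ k : ℤ, 1 ≤ k →
      ‖a - ∑ j ∈ Finset.Icc (-k) k, ρ j‖ ≤ Real.sqrt (2 / (k : ℝ)) := by
  classical
  intro k hk
  set b : H →L[ℂ] H := a - ∑ j ∈ Finset.Icc (-k) k, ρ j with hbdef
  clear_value b
  -- orthogonality of the ranges of the projections
  have horthPQ : ∀ (i j : ℤ), i ≠ j → ∀ x y : H, ⟪P i x, P j y⟫_ℂ = 0 := by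
    intro i j hij x y
    have hmove : (⟪P i x, P j y⟫_ℂ) = ⟪x, P i (P j y)⟫_ℂ := by
      conv_lhs => rw [← (hPsa i).adjoint_eq]
      exact ContinuousLinearMap.adjoint_inner_left (P i) (P j y) x
    have hz : P i (P j y) = 0 := by
      have := congrArg (fun q : H →L[ℂ] H => q y) (hPorth i j hij)
      simpa using this
    rw [hmove, hz, inner_zero_right]
  -- pointwise action of b between the projections
  have hPmb : ∀ m n : ℤ, ∀ x : H,
      P m (b (P n x)) = if k < |m - n| then P m (a (P n x)) else 0 := by
    intro m n x
    have hsum : P m (b (P n x))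
        = P m (a (P n x)) - ∑ j ∈ Finset.Icc (-k) k, ((P m).comp ((ρ j).comp (P n))) x := by
      simp only [hbdef, ContinuousLinearMap.sub_apply, ContinuousLinearMap.sum_apply,
        map_sub, map_sum, ContinuousLinearMap.comp_apply]
    by_cases h : k < |m - n|
    · rw [if_pos h, hsum]
      have hz : ∀ j ∈ Finset.Icc (-k) k, ((P m).comp ((ρ j).comp (P n))) x = 0 := by
        intro j hj
        rw [Finset.mem_Icc] at hj
        have hmn : m - n ≠ j := by
          intro hEq
          rw [hEq] at h
          have := abs_le.mpr hj
          omega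
        rw [hρne j m n hmn]
        rfl
      rw [Finset.sum_eq_zero hz, sub_zero]
    · rw [if_neg h, hsum]
      push_neg at h
      have hmem : m - n ∈ Finset.Icc (-k) k := Finset.mem_Icc.mpr (abs_le.mp h)
      have hmain : ((P m).comp ((ρ (m - n)).comp (P n))) x = P m (a (P n x)) := by
        rw [hρeq (m - n) m n rfl]
        simp [ContinuousLinearMap.comp_apply]
      rw [Finset.sum_eq_single_of_mem (m - n) hmem (fun j _ hjne => by
        rw [hρne j m n (fun hEq => hjne (hEq ▸ rfl))]; rfl), hmain, sub_self]
  -- pointwise version of the commutator hypothesis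
  have hcapp : ∀ m n : ℤ, ∀ x : H,
      P m (c (P n x)) = ((m - n : ℤ) : ℂ) • P m (a (P n x)) := by
    intro m n x
    have := congrArg (fun q : H →L[ℂ] H => q x) (hcomm m n)
    simpa using this
  -- now prove the operator norm bound
  refine ContinuousLinearMap.opNorm_le_bound _ (Real.sqrt_nonneg _) fun v => ?_
  set g : ℤ → ℤ → ℂ := fun m n => if k < |m - n| then ((m - n : ℤ) : ℂ)⁻¹ else 0 with hgdef
  clear_value g
  set r : ℤ → ℝ := fun j => if k < |j| then ((j : ℝ) ^ 2)⁻¹ else 0 with hrdef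
  clear_value r
  have hg_norm : ∀ m n : ℤ, ‖g m n‖ ^ 2 = r (m - n) := by
    intro m n
    by_cases h : k < |m - n|
    · simp only [hgdef, hrdef, if_pos h]
      have hcast : ((m - n : ℤ) : ℂ) = (((m - n : ℤ) : ℝ) : ℂ) := by push_cast; ring
      rw [hcast, norm_inv, Complex.norm_real, Real.norm_eq_abs, inv_pow, sq_abs]
    · simp [hgdef, hrdef, h]
  have hr_nonneg : ∀ j, 0 ≤ r j := by
    intro j; simp only [hrdef]; split <;> positivity
  have hr_le_one : ∀ j, r j ≤ 1 := by
    intro j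
    simp only [hrdef]
    split
    · rename_i h
      have h1 : (1:ℝ) ≤ ((j:ℝ))^2 := by
        have : 1 ≤ |j| := by omega
        have h2 : (1:ℝ) ≤ |(j:ℝ)| := by exact_mod_cast (by exact_mod_cast this : (1:ℝ) ≤ (|j| : ℝ))
        nlinarith [abs_nonneg (j:ℝ), sq_abs (j:ℝ)]
      rw [inv_le_one_iff₀]
      right; exact h1
    · norm_num
  -- Parseval for v
  have hv2 : HasSum (fun n => ‖P n v‖ ^ 2) (‖v‖ ^ 2) :=
    hasSumParseval (fun i j hij => horthPQ i j hij v v) (hPsum v)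
  -- summability of the weighted families
  have horthg : ∀ m : ℤ, ∀ i j : ℤ, i ≠ j →
      ⟪g m i • P i v, g m j • P j v⟫_ℂ = 0 := by
    intro m i j hij
    rw [inner_smul_left, inner_smul_right, horthPQ i j hij v v]
    ring
  have hqsum : ∀ m : ℤ, Summable (fun n => ‖g m n • P n v‖ ^ 2) := by
    intro m
    refine Summable.of_nonneg_of_le (fun n => by positivity) (fun n => ?_) hv2.summable
    rw [norm_smul, mul_pow, hg_norm]
    calc r (m - n) * ‖P n v‖ ^ 2 ≤ 1 * ‖P n v‖ ^ 2 :=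
          mul_le_mul_of_nonneg_right (hr_le_one _) (by positivity)
      _ = ‖P n v‖ ^ 2 := one_mul _
  have hwsummable : ∀ m : ℤ, Summable (fun n => g m n • P n v) :=
    fun m => orthSummable (horthg m) (hqsum m)
  set w : ℤ → H := fun m => ∑' n, g m n • P n v with hwdef
  have hw_sum : ∀ m : ℤ, HasSum (fun n => g m n • P n v) (w m) :=
    fun m => (hwsummable m).hasSum
  clear_value w
  -- the key identity P m (b v) = P m (c (w m))
  have hkey : ∀ m : ℤ, P m (b v) = P m (c (w m)) := by
    intro m
    have h1 : HasSum (fun n => ((P m).comp b) (P n v)) (((P m).comp b) v) :=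
      ContinuousLinearMap.hasSum _ (hPsum v)
    have h2 : HasSum (fun n => ((P m).comp c) (g m n • P n v)) (((P m).comp c) (w m)) :=
      ContinuousLinearMap.hasSum _ (hw_sum m)
    have h1' : HasSum (fun n => P m (b (P n v))) (P m (b v)) := by
      simpa only [ContinuousLinearMap.comp_apply] using h1
    have h2' : HasSum (fun n => g m n • P m (c (P n v))) (P m (c (w m))) := by
      simpa only [ContinuousLinearMap.comp_apply, map_smul] using h2
    have hterm : ∀ n : ℤ, P m (b (P n v)) = g m n • P m (c (P n v)) := by
      intro n
      rw [hPmb m n v, hcapp m n v]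
      by_cases h : k < |m - n|
      · rw [if_pos h]
        simp only [hgdef, if_pos h, smul_smul]
        have hne : ((m - n : ℤ) : ℂ) ≠ 0 := by
          simp only [ne_eq, Int.cast_eq_zero]
          intro h0
          rw [h0] at h
          simp only [abs_zero] at h
          omega
        rw [inv_mul_cancel₀ hne, one_smul]
      · rw [if_neg h]
        simp only [hgdef, if_neg h, zero_smul]
    rw [funext hterm] at h1'
    exact h1'.unique h2'
  -- norm comparison
  have hnorm : ∀ m : ℤ, ‖P m (b v)‖ ^ 2 ≤ ‖w m‖ ^ 2 := by
    intro m
    rw [hkey m]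
    have h1 : ‖P m (c (w m))‖ ≤ ‖c (w m)‖ :=
      projContraction (P m) (hPsa m) (hPidem m) _
    have h2 : ‖c (w m)‖ ≤ ‖w m‖ := by
      calc ‖c (w m)‖ ≤ ‖c‖ * ‖w m‖ := c.le_opNorm _
        _ ≤ 1 * ‖w m‖ := mul_le_mul_of_nonneg_right hc (norm_nonneg _)
        _ = ‖w m‖ := one_mul _
    have := h1.trans h2
    exact pow_le_pow_left₀ (norm_nonneg _) this 2
  -- Parseval for each w m
  have hwm2 : ∀ m : ℤ, HasSum (fun n => r (m - n) * ‖P n v‖ ^ 2) (‖w m‖ ^ 2) := by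
    intro m
    have := hasSumParseval (horthg m) (hw_sum m)
    refine this.congr_fun fun n => ?_
    rw [norm_smul, mul_pow, hg_norm]
  -- Parseval for b v
  have hb2 : HasSum (fun m => ‖P m (b v)‖ ^ 2) (‖b v‖ ^ 2) :=
    hasSumParseval (fun i j hij => horthPQ i j hij (b v) (b v)) (hPsum (b v))
  -- summability of r and the tail bound
  have hSr : Summable r := by
    have hbase : Summable (fun j : ℤ => 1 / (j : ℝ) ^ 2) := Real.summable_one_div_int_pow.mpr (by norm_num)
    refine Summable.of_nonneg_of_le hr_nonneg (fun j => ?_) hbase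
    simp only [hrdef]
    split
    · rw [one_div]
    · positivity
  obtain ⟨S, hSsum⟩ := hSr
  have hSr : Summable r := hSsum.summable
  have hS : S ≤ 2 / (k : ℝ) := by
    rw [← hSsum.tsum_eq]
    exact Summable.tsum_le_of_sum_le hSr (fun s => by simpa only [hrdef] using intTailSum k hk s)
  -- the translated sums
  have hqm : ∀ n : ℤ, HasSum (fun m => r (m - n) * ‖P n v‖ ^ 2) (S * ‖P n v‖ ^ 2) := by
    intro n
    have h1 : HasSum (fun m => r (m - n)) S :=
      (Equiv.subRight n).hasSum_iff.mpr hSsum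
    exact h1.mul_right _
  -- double sums
  set Fs : ℤ × ℤ → ℝ := fun p => r (p.2 - p.1) * ‖P p.1 v‖ ^ 2 with hFsdef
  have hFs_nonneg : ∀ p, 0 ≤ Fs p := fun p => by
    simp only [hFsdef]; exact mul_nonneg (hr_nonneg _) (by positivity)
  have hFs_summable : Summable Fs := by
    rw [summable_prod_of_nonneg hFs_nonneg]
    constructor
    · exact fun n => (hqm n).summable
    · refine (hv2.summable.mul_left S).congr fun n => ?_
      exact ((hqm n).tsum_eq).symm
  have htsum_Fs : ∑' p, Fs p = S * ‖v‖ ^ 2 := by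
    rw [Summable.tsum_prod hFs_summable]
    calc (∑' n, ∑' m, Fs (n, m)) = ∑' n, S * ‖P n v‖ ^ 2 :=
          tsum_congr fun n => (hqm n).tsum_eq
      _ = S * ∑' n, ‖P n v‖ ^ 2 := tsum_mul_left
      _ = S * ‖v‖ ^ 2 := by rw [hv2.tsum_eq]
  set F : ℤ × ℤ → ℝ := fun p => r (p.1 - p.2) * ‖P p.2 v‖ ^ 2 with hFdef
  have hF_eq : ∀ p : ℤ × ℤ, F p = Fs p.swap := fun p => rfl
  have hF_summable : Summable F := by
    have := hFs_summable.prod_symm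
    exact this.congr fun p => (hF_eq p).symm
  have hF_nonneg : ∀ p, 0 ≤ F p := fun p => by rw [hF_eq]; exact hFs_nonneg _
  have htsum_F : ∑' p, F p = ∑' p, Fs p := by
    rw [funext hF_eq]
    exact (Equiv.prodComm ℤ ℤ).tsum_eq Fs
  have hinner : ∀ m : ℤ, ‖w m‖ ^ 2 = ∑' n, F (m, n) := by
    intro m
    exact ((hwm2 m).tsum_eq).symm
  have hsumw : Summable (fun m => ‖w m‖ ^ 2) := by
    have h := ((summable_prod_of_nonneg hF_nonneg).mp hF_summable).2
    exact h.congr fun m => (hinner m).symm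
  have htot : ∑' m, ‖w m‖ ^ 2 = S * ‖v‖ ^ 2 := by
    calc (∑' m, ‖w m‖ ^ 2) = ∑' m, ∑' n, F (m, n) := tsum_congr hinner
      _ = ∑' p, F p := (Summable.tsum_prod hF_summable).symm
      _ = ∑' p, Fs p := htsum_F
      _ = S * ‖v‖ ^ 2 := htsum_Fs
  -- putting everything together
  have hfinal : ‖b v‖ ^ 2 ≤ (2 / (k : ℝ)) * ‖v‖ ^ 2 := by
    calc ‖b v‖ ^ 2 = ∑' m, ‖P m (b v)‖ ^ 2 := hb2.tsum_eq.symm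
      _ ≤ ∑' m, ‖w m‖ ^ 2 := Summable.tsum_le_tsum hnorm hb2.summable hsumw
      _ = S * ‖v‖ ^ 2 := htot
      _ ≤ (2 / (k : ℝ)) * ‖v‖ ^ 2 := mul_le_mul_of_nonneg_right hS (by positivity)
  have hk0 : (0:ℝ) ≤ 2 / (k : ℝ) := by
    have : (0:ℝ) < (k:ℝ) := by exact_mod_cast (by omega : (0:ℤ) < k)
    positivity
  calc ‖b v‖ = Real.sqrt (‖b v‖ ^ 2) := (Real.sqrt_sq (norm_nonneg _)).symm
    _ ≤ Real.sqrt ((2 / (k : ℝ)) * ‖v‖ ^ 2) := Real.sqrt_le_sqrt hfinal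
    _ = Real.sqrt (2 / (k : ℝ)) * ‖v‖ := by
        rw [Real.sqrt_mul hk0, Real.sqrt_sq (norm_nonneg _)]
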